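/- A globular set X is n-coskeletal if and only if for every k ≥ n the map X_{k+1} → X_k × X_k, c ↦ (s(c), t(c)), is injective with image exactly the set of parallel pairs of k-cells; that is, if and only if for every k ≥ n each pair of parallel k-cells (x, y) of X admits exactly one (k+1)-cell with source x and target y. -/

import Mathlib

open CategoryTheory CategoryTheory.Limits Opposite

/-- Morphisms of the globe category. -/
inductive GlobeHom : ℕ → ℕ → Type where
  | ident (m : ℕ) : GlobeHom m m
  | sig {m n : ℕ} (h : m < n) : GlobeHom m n
  | tau {m n : ℕ} (h : m < n) : GlobeHom m n

/-- Composition in the globe category: determined by the inner factor. -/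
def GlobeHom.comp : {a b c : ℕ} → GlobeHom a b → GlobeHom b c → GlobeHom a c
  | _, _, _, .ident _, g => g
  | _, _, _, .sig h, .ident _ => .sig h
  | _, _, _, .sig h, .sig h' => .sig (h.trans h')
  | _, _, _, .sig h, .tau h' => .sig (h.trans h')
  | _, _, _, .tau h, .ident _ => .tau h
  | _, _, _, .tau h, .sig h' => .tau (h.trans h')
  | _, _, _, .tau h, .tau h' => .tau (h.trans h')

lemma GlobeHom.comp_assoc : ∀ {a b c d : ℕ} (f : GlobeHom a b) (g : GlobeHom b c)
    (h : GlobeHom c d), (f.comp g).comp h = f.comp (g.comp h) := by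
  intro a b c d f g h
  cases f <;> cases g <;> cases h <;> rfl

lemma GlobeHom.le : ∀ {a b : ℕ}, GlobeHom a b → a ≤ b
  | _, _, .ident _ => le_rfl
  | _, _, .sig h => h.le
  | _, _, .tau h => h.le

/-- The globe category `G`: objects are natural numbers. -/
def Globe : Type := ℕ

instance : Category Globe where
  Hom m n := GlobeHom m n
  id m := GlobeHom.ident m
  comp f g := f.comp g
  id_comp _ := rfl
  comp_id := by rintro _ _ (_|_|_) <;> rfl
  assoc f g h := GlobeHom.comp_assoc f g h

/-- The object of `Globe` corresponding to `k : ℕ`. -/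
def gl (k : ℕ) : Globe := k

/-- The underlying natural number of an object of `Globe`. -/
def gval (m : Globe) : ℕ := m

/-- Globular sets: presheaves on the globe category. -/
abbrev GlobSet := Globeᵒᵖ ⥤ Type

/-- The source map `X_{k+1} → X_k` of a globular set. -/
def gsrc (X : GlobSet) (k : ℕ) : X.obj (op (gl (k+1))) → X.obj (op (gl k)) :=
  X.map (Quiver.Hom.op (show gl k ⟶ gl (k+1) from GlobeHom.sig (Nat.lt_succ_self k)))

/-- The target map `X_{k+1} → X_k` of a globular set. -/
def gtgt (X : GlobSet) (k : ℕ) : X.obj (op (gl (k+1))) → X.obj (op (gl k)) :=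
  X.map (Quiver.Hom.op (show gl k ⟶ gl (k+1) from GlobeHom.tau (Nat.lt_succ_self k)))

/-- Two `k`-cells are parallel if `k = 0` or they have the same source and target. -/
def Parallel (X : GlobSet) : (k : ℕ) → X.obj (op (gl k)) → X.obj (op (gl k)) → Prop
  | 0, _, _ => True
  | (k+1), x, y => gsrc X k x = gsrc X k y ∧ gtgt X k x = gtgt X k y

/-- The full subcategory `G_n` of the globe category on objects `≤ n`. -/
def GlobeLE (n : ℕ) := ObjectProperty.FullSubcategory (fun m : Globe => gval m ≤ n)

instance (n : ℕ) : Category (GlobeLE n) := ObjectProperty.FullSubcategory.category _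

/-- The inclusion `ι_n : G_n ⥤ G`. -/
def iotaGlobe (n : ℕ) : GlobeLE n ⥤ Globe := ObjectProperty.ι _

/-- A morphism of globes coming from an equality of dimensions. -/
def GlobeHom.ofEq : {a b : ℕ} → a = b → GlobeHom a b
  | _, _, rfl => .ident _

/-- A tag distinguishing the three kinds of globe morphisms. -/
def GlobeHom.tag : {a b : ℕ} → GlobeHom a b → ℕ
  | _, _, .ident _ => 0
  | _, _, .sig _ => 1
  | _, _, .tau _ => 2

lemma GlobeHom.ext_tag : ∀ {a b : ℕ} (f g : GlobeHom a b), f.tag = g.tag → f = g := by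
  intro a b f g h
  cases f <;> cases g <;> simp_all [GlobeHom.tag]

lemma GlobeHom.tag_comp : ∀ {a b c : ℕ} (f : GlobeHom a b) (g : GlobeHom b c),
    (f.comp g).tag = if f.tag = 0 then g.tag else f.tag := by
  intro a b c f g
  cases f <;> cases g <;> simp [GlobeHom.comp, GlobeHom.tag]

lemma GlobeHom.tag_ofEq {a b : ℕ} (h : a = b) : (GlobeHom.ofEq h).tag = 0 := by
  cases h; rfl

/-- The truncation of a globe morphism. -/
def GlobeHom.trunc (n : ℕ) : {a b : ℕ} → GlobeHom a b → GlobeHom (min a n) (min b n)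
  | _, _, .ident m => .ident _
  | a, b, .sig h => if h' : min a n < min b n then .sig h' else .ofEq (by omega)
  | a, b, .tau h => if h' : min a n < min b n then .tau h' else .ofEq (by omega)

lemma GlobeHom.tag_trunc (n : ℕ) : ∀ {a b : ℕ} (f : GlobeHom a b),
    (f.trunc n).tag = if min a n < min b n then f.tag else 0 := by
  intro a b f
  cases f with
  | ident => simp [GlobeHom.trunc, GlobeHom.tag]
  | sig h =>
      rw [GlobeHom.trunc]
      split
      · simp_all [GlobeHom.tag]
      · rw [GlobeHom.tag_ofEq]
  | tau h =>
      rw [GlobeHom.trunc]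
      split
      · simp_all [GlobeHom.tag]
      · rw [GlobeHom.tag_ofEq]

/-- The truncation functor `t_n : G ⥤ G_n`. -/
def truncFunctor (n : ℕ) : Globe ⥤ GlobeLE n where
  obj k := ⟨gl (min (gval k) n), min_le_right _ _⟩
  map {a b} f := ObjectProperty.homMk (GlobeHom.trunc n f)
  map_id _ := rfl
  map_comp {a b c} f g := by
    apply ObjectProperty.hom_ext
    apply GlobeHom.ext_tag
    have hab := GlobeHom.le f
    have hbc := GlobeHom.le g
    show ((GlobeHom.comp (f : GlobeHom (gval a) (gval b)) (g : GlobeHom (gval b) (gval c))).trunc n).tag =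
      (((f : GlobeHom (gval a) (gval b)).trunc n).comp ((g : GlobeHom (gval b) (gval c)).trunc n)).tag
    erw [GlobeHom.tag_trunc, GlobeHom.tag_comp, GlobeHom.tag_comp, GlobeHom.tag_trunc,
      GlobeHom.tag_trunc]
    revert f g
    show ∀ (f : GlobeHom a b) (g : GlobeHom b c), _
    intro f g
    cases f <;> cases g <;> simp [GlobeHom.tag] <;> split_ifs <;> omega

/-- The precomposition functor `t_n^*`. -/
def tStar (n : ℕ) : ((GlobeLE n)ᵒᵖ ⥤ Type) ⥤ GlobSet :=
  (Functor.whiskeringLeft _ _ _).obj (truncFunctor n).op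

/-- The left Kan extension functor `t_{n!}`, left adjoint of `t_n^*`. -/
noncomputable def tLan (n : ℕ) : GlobSet ⥤ ((GlobeLE n)ᵒᵖ ⥤ Type) :=
  (truncFunctor n).op.lan

/-- The adjunction `t_{n!} ⊣ t_n^*`. -/
noncomputable def tAdj (n : ℕ) : tLan n ⊣ tStar n :=
  Functor.lanAdjunction _ _

/-- A globular set is `n`-truncated if the unit of `t_{n!} ⊣ t_n^*` is an isomorphism at it. -/
def IsTruncated (n : ℕ) (X : GlobSet) : Prop := IsIso ((tAdj n).unit.app X)

/-- The restriction functor `ι_n^*`. -/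
def iotaStar (n : ℕ) : GlobSet ⥤ ((GlobeLE n)ᵒᵖ ⥤ Type) :=
  (Functor.whiskeringLeft _ _ _).obj (iotaGlobe n).op

/-- The right Kan extension functor `ι_{n*}`, right adjoint of `ι_n^*`. -/
noncomputable def iotaRan (n : ℕ) : ((GlobeLE n)ᵒᵖ ⥤ Type) ⥤ GlobSet :=
  (iotaGlobe n).op.ran

/-- The adjunction `ι_n^* ⊣ ι_{n*}`. -/
noncomputable def iotaAdj (n : ℕ) : iotaStar n ⊣ iotaRan n :=
  Functor.ranAdjunction _ _

/-- A globular set is `n`-coskeletal if the unit of `ι_n^* ⊣ ι_{n*}` is an isomorphism at it. -/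
def IsCoskeletal (n : ℕ) (X : GlobSet) : Prop := IsIso ((iotaAdj n).unit.app X)

/-- The representable globular set `D_k`. -/
def disk (k : ℕ) : GlobSet := yoneda.obj (gl k)

/-- The boundary `∂D_k` of the `k`-disk. -/
def boundary (k : ℕ) : GlobSet where
  obj m := { f : GlobeHom (gval m.unop) k // gval m.unop < k }
  map {m m'} g := TypeCat.ofHom (fun f => ⟨GlobeHom.comp g.unop f.1, lt_of_le_of_lt (GlobeHom.le g.unop) f.2⟩)
  map_id m := by ext f; rfl
  map_comp {m m' m''} g h := by
    ext f; exact (GlobeHom.comp_assoc h.unop g.unop f.1)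

/-- The boundary inclusion `∂D_k ⟶ D_k`. -/
def boundaryIncl (k : ℕ) : boundary k ⟶ disk k where
  app m := TypeCat.ofHom (fun f => f.1)
  naturality m m' g := by ext f; rfl


/-! ### Auxiliary development for statement 5 -/

/-- `σ` as a morphism of the globe category. -/
def sigma' {a b : ℕ} (h : a < b) : gl a ⟶ gl b := GlobeHom.sig h

/-- `τ` as a morphism of the globe category. -/
def tau' {a b : ℕ} (h : a < b) : gl a ⟶ gl b := GlobeHom.tau h

lemma ss' {a b c : ℕ} (h1 : a < b) (h2 : b < c) :
    sigma' h1 ≫ sigma' h2 = sigma' (h1.trans h2) := rfl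
lemma st' {a b c : ℕ} (h1 : a < b) (h2 : b < c) :
    sigma' h1 ≫ tau' h2 = sigma' (h1.trans h2) := rfl
lemma ts' {a b c : ℕ} (h1 : a < b) (h2 : b < c) :
    tau' h1 ≫ sigma' h2 = tau' (h1.trans h2) := rfl
lemma tt' {a b c : ℕ} (h1 : a < b) (h2 : b < c) :
    tau' h1 ≫ tau' h2 = tau' (h1.trans h2) := rfl

lemma gsrc_eq (X : GlobSet) (k : ℕ) (h : k < k + 1) :
    gsrc X k = X.map (sigma' h).op := rfl

lemma gtgt_eq (X : GlobSet) (k : ℕ) (h : k < k + 1) :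
    gtgt X k = X.map (tau' h).op := rfl

lemma mapmap (X : GlobSet) {a b c : Globe} (f : a ⟶ b) (g : b ⟶ c) (x : X.obj (op c)) :
    X.map f.op (X.map g.op x) = X.map (f ≫ g).op x := by
  rw [op_comp, FunctorToTypes.map_comp_apply]

lemma parallel_map_sig (X : GlobSet) {n : ℕ} {x y : X.obj (op (gl n))}
    (hpar : Parallel X n x y) {a : ℕ} (h : a < n) :
    X.map (sigma' h).op x = X.map (sigma' h).op y := by
  cases n with
  | zero => omega
  | succ p =>
    obtain ⟨hs, ht⟩ := hpar
    rcases Nat.lt_or_ge a p with h' | h'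
    · have e : sigma' h = sigma' h' ≫ sigma' (Nat.lt_succ_self p) := rfl
      rw [e, ← mapmap, ← mapmap, ← gsrc_eq X p (Nat.lt_succ_self p), hs]
    · have e : a = p := by omega
      subst e
      exact hs

lemma parallel_map_tau (X : GlobSet) {n : ℕ} {x y : X.obj (op (gl n))}
    (hpar : Parallel X n x y) {a : ℕ} (h : a < n) :
    X.map (tau' h).op x = X.map (tau' h).op y := by
  cases n with
  | zero => omega
  | succ p =>
    obtain ⟨hs, ht⟩ := hpar
    rcases Nat.lt_or_ge a p with h' | h'
    · have e : tau' h = tau' h' ≫ sigma' (Nat.lt_succ_self p) := rfl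
      rw [e, ← mapmap, ← mapmap, ← gsrc_eq X p (Nat.lt_succ_self p), hs]
    · have e : a = p := by omega
      subst e
      exact ht

/-- The set of parallel pairs of `n`-cells. -/
def PPair (X : GlobSet) (n : ℕ) : Type :=
  {p : X.obj (op (gl n)) × X.obj (op (gl n)) // Parallel X n p.1 p.2}

lemma parallel_pair (X : GlobSet) {n m : ℕ} (h : n < m) (c : X.obj (op (gl m))) :
    Parallel X n (X.map (sigma' h).op c) (X.map (tau' h).op c) := by
  cases n with
  | zero => trivial
  | succ p =>
    constructor
    · rw [gsrc_eq X p (Nat.lt_succ_self p), mapmap, mapmap, ss', st']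
    · rw [gtgt_eq X p (Nat.lt_succ_self p), mapmap, mapmap, ts', tt']

/-- The canonical map `X_m → PPair X n` for `n < m`. -/
def Phi (X : GlobSet) {n m : ℕ} (h : n < m) (c : X.obj (op (gl m))) : PPair X n :=
  ⟨(X.map (sigma' h).op c, X.map (tau' h).op c), parallel_pair X h c⟩

lemma phi_eq {X : GlobSet} {n m : ℕ} (h : n < m) {a b : X.obj (op (gl m))}
    (h1 : X.map (sigma' h).op a = X.map (sigma' h).op b)
    (h2 : X.map (tau' h).op a = X.map (tau' h).op b) : Phi X h a = Phi X h b :=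
  Subtype.ext (Prod.ext h1 h2)

/-- Monotone globe morphisms from a non-strict inequality (the `σ` flavour). -/
def sigLE {a b : ℕ} (h : a ≤ b) : gl a ⟶ gl b :=
  if h' : a < b then GlobeHom.sig h' else GlobeHom.ofEq (le_antisymm h (le_of_not_gt h'))

/-- Monotone globe morphisms from a non-strict inequality (the `τ` flavour). -/
def tauLE {a b : ℕ} (h : a ≤ b) : gl a ⟶ gl b :=
  if h' : a < b then GlobeHom.tau h' else GlobeHom.ofEq (le_antisymm h (le_of_not_gt h'))

lemma sigLE_lt {a n : ℕ} (ha : a ≤ n) (h : a < n) : sigLE ha = sigma' h := by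
  simp only [sigLE]; rw [dif_pos h]; rfl

lemma tauLE_lt {a n : ℕ} (ha : a ≤ n) (h : a < n) : tauLE ha = tau' h := by
  simp only [tauLE]; rw [dif_pos h]; rfl

lemma sigLE_self {n : ℕ} (h : n ≤ n) : sigLE h = 𝟙 (gl n) := by
  simp only [sigLE]; rw [dif_neg (lt_irrefl n)]; rfl

lemma tauLE_self {n : ℕ} (h : n ≤ n) : tauLE h = 𝟙 (gl n) := by
  simp only [tauLE]; rw [dif_neg (lt_irrefl n)]; rfl

lemma sig_comp_sigLE {a b n : ℕ} (hu : a < b) (hb : b ≤ n) :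
    sigma' hu ≫ sigLE hb = sigma' (lt_of_lt_of_le hu hb) := by
  simp only [sigLE]; split
  · rfl
  · have e : b = n := by omega
    subst e; rfl

lemma sig_comp_tauLE {a b n : ℕ} (hu : a < b) (hb : b ≤ n) :
    sigma' hu ≫ tauLE hb = sigma' (lt_of_lt_of_le hu hb) := by
  simp only [tauLE]; split
  · rfl
  · have e : b = n := by omega
    subst e; rfl

lemma tau_comp_sigLE {a b n : ℕ} (hu : a < b) (hb : b ≤ n) :
    tau' hu ≫ sigLE hb = tau' (lt_of_lt_of_le hu hb) := by
  simp only [sigLE]; split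
  · rfl
  · have e : b = n := by omega
    subst e; rfl

lemma tau_comp_tauLE {a b n : ℕ} (hu : a < b) (hb : b ≤ n) :
    tau' hu ≫ tauLE hb = tau' (lt_of_lt_of_le hu hb) := by
  simp only [tauLE]; split
  · rfl
  · have e : b = n := by omega
    subst e; rfl

lemma sigLE_comp_sig {a n m : ℕ} (ha : a ≤ n) (hm : n < m) :
    sigLE ha ≫ sigma' hm = sigma' (lt_of_le_of_lt ha hm) := by
  simp only [sigLE]; split
  · rfl
  · have e : a = n := by omega
    subst e; rfl

lemma tauLE_comp_tau {a n m : ℕ} (ha : a ≤ n) (hm : n < m) :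
    tauLE ha ≫ tau' hm = tau' (lt_of_le_of_lt ha hm) := by
  simp only [tauLE]; split
  · rfl
  · have e : a = n := by omega
    subst e; rfl

/-- An object of `G_n` from `a ≤ n`. -/
def glen (n a : ℕ) (h : a ≤ n) : GlobeLE n := ⟨gl a, h⟩

/-- The components of the inverse natural transformation, sending a generating
morphism of the boundary to the appropriately restricted cell. -/
def bwdApp (X : GlobSet) (n : ℕ) (x y : X.obj (op (gl n))) {a m : ℕ} (ha : a ≤ n)
    (hm : n < m) : GlobeHom a m → X.obj (op (gl a)) := fun g =>
  match g with
  | .ident _ => (Nat.lt_irrefl n (lt_of_lt_of_le hm ha)).elim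
  | .sig _ => X.map (sigLE ha).op x
  | .tau _ => X.map (tauLE ha).op y

lemma bwd_nat (X : GlobSet) (n : ℕ) (x y : X.obj (op (gl n))) (hpar : Parallel X n x y)
    {a b m : ℕ} (ha : a ≤ n) (hb : b ≤ n) (hm : n < m) (u : GlobeHom a b)
    (g : GlobeHom b m) :
    bwdApp X n x y ha hm (u.comp g) =
      X.map (Quiver.Hom.op (show gl a ⟶ gl b from u)) (bwdApp X n x y hb hm g) := by
  cases g with
  | ident => exact absurd hb (by omega)
  | sig hg =>
    cases u with
    | ident => exact (FunctorToTypes.map_id_apply X _).symm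
    | sig hu =>
      show X.map (sigLE ha).op x = X.map (sigma' hu).op (X.map (sigLE hb).op x)
      rw [mapmap, sig_comp_sigLE, sigLE_lt ha (lt_of_lt_of_le hu hb)]
    | tau hu =>
      show X.map (tauLE ha).op y = X.map (tau' hu).op (X.map (sigLE hb).op x)
      rw [mapmap, tau_comp_sigLE, tauLE_lt ha (lt_of_lt_of_le hu hb)]
      exact (parallel_map_tau X hpar _).symm
  | tau hg =>
    cases u with
    | ident => exact (FunctorToTypes.map_id_apply X _).symm
    | sig hu =>
      show X.map (sigLE ha).op x = X.map (sigma' hu).op (X.map (tauLE hb).op y)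
      rw [mapmap, sig_comp_tauLE, sigLE_lt ha (lt_of_lt_of_le hu hb)]
      exact parallel_map_sig X hpar _
    | tau hu =>
      show X.map (tauLE ha).op y = X.map (tau' hu).op (X.map (tauLE hb).op y)
      rw [mapmap, tau_comp_tauLE, tauLE_lt ha (lt_of_lt_of_le hu hb)]

/-- A parallel pair in `X_n` induces a morphism of restricted presheaves. -/
def Bwd (X : GlobSet) (n : ℕ) {m : ℕ} (hm : n < m) (p : PPair X n) :
    (iotaStar n).obj (yoneda.obj (gl m)) ⟶ (iotaStar n).obj X where
  app j := TypeCat.ofHom (fun g => bwdApp X n p.1.1 p.1.2 j.unop.property hm g)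
  naturality j j' f := by
    ext g
    exact bwd_nat X n p.1.1 p.1.2 p.2 j'.unop.property j.unop.property hm f.unop.hom g

lemma fwd_parallel (X : GlobSet) (n : ℕ) {m : ℕ} (hm : n < m)
    (α : (iotaStar n).obj (yoneda.obj (gl m)) ⟶ (iotaStar n).obj X) :
    Parallel X n (α.app (op (glen n n le_rfl)) (GlobeHom.sig hm))
      (α.app (op (glen n n le_rfl)) (GlobeHom.tau hm)) := by
  cases n with
  | zero => trivial
  | succ p =>
    have h1 : α.app (op (glen (p + 1) p (Nat.le_succ p)))
          ((sigma' (Nat.lt_succ_self p) ≫ sigma' hm : gl p ⟶ gl m)) =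
        X.map (sigma' (Nat.lt_succ_self p)).op
          (α.app (op (glen (p + 1) (p + 1) le_rfl)) (GlobeHom.sig hm)) :=
      ConcreteCategory.congr_hom (α.naturality (Quiver.Hom.op
        (show glen (p + 1) p (Nat.le_succ p) ⟶ glen (p + 1) (p + 1) le_rfl from
          ObjectProperty.homMk (sigma' (Nat.lt_succ_self p))))) (GlobeHom.sig hm)
    have h2 : α.app (op (glen (p + 1) p (Nat.le_succ p)))
          ((sigma' (Nat.lt_succ_self p) ≫ tau' hm : gl p ⟶ gl m)) =
        X.map (sigma' (Nat.lt_succ_self p)).op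
          (α.app (op (glen (p + 1) (p + 1) le_rfl)) (GlobeHom.tau hm)) :=
      ConcreteCategory.congr_hom (α.naturality (Quiver.Hom.op
        (show glen (p + 1) p (Nat.le_succ p) ⟶ glen (p + 1) (p + 1) le_rfl from
          ObjectProperty.homMk (sigma' (Nat.lt_succ_self p))))) (GlobeHom.tau hm)
    have h3 : α.app (op (glen (p + 1) p (Nat.le_succ p)))
          ((tau' (Nat.lt_succ_self p) ≫ sigma' hm : gl p ⟶ gl m)) =
        X.map (tau' (Nat.lt_succ_self p)).op
          (α.app (op (glen (p + 1) (p + 1) le_rfl)) (GlobeHom.sig hm)) :=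
      ConcreteCategory.congr_hom (α.naturality (Quiver.Hom.op
        (show glen (p + 1) p (Nat.le_succ p) ⟶ glen (p + 1) (p + 1) le_rfl from
          ObjectProperty.homMk (tau' (Nat.lt_succ_self p))))) (GlobeHom.sig hm)
    have h4 : α.app (op (glen (p + 1) p (Nat.le_succ p)))
          ((tau' (Nat.lt_succ_self p) ≫ tau' hm : gl p ⟶ gl m)) =
        X.map (tau' (Nat.lt_succ_self p)).op
          (α.app (op (glen (p + 1) (p + 1) le_rfl)) (GlobeHom.tau hm)) :=
      ConcreteCategory.congr_hom (α.naturality (Quiver.Hom.op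
        (show glen (p + 1) p (Nat.le_succ p) ⟶ glen (p + 1) (p + 1) le_rfl from
          ObjectProperty.homMk (tau' (Nat.lt_succ_self p))))) (GlobeHom.tau hm)
    exact ⟨h1.symm.trans h2, h3.symm.trans h4⟩

/-- A morphism of restricted presheaves yields a parallel pair in `X_n`. -/
def Fwd (X : GlobSet) (n : ℕ) {m : ℕ} (hm : n < m)
    (α : (iotaStar n).obj (yoneda.obj (gl m)) ⟶ (iotaStar n).obj X) : PPair X n :=
  ⟨(α.app (op (glen n n le_rfl)) (GlobeHom.sig hm),
    α.app (op (glen n n le_rfl)) (GlobeHom.tau hm)), fwd_parallel X n hm α⟩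

lemma bwd_fwd_app (X : GlobSet) (n : ℕ) {m : ℕ} (hm : n < m)
    (α : (iotaStar n).obj (yoneda.obj (gl m)) ⟶ (iotaStar n).obj X)
    {a : ℕ} (ha : a ≤ n) (g : GlobeHom a m) :
    bwdApp X n (α.app (op (glen n n le_rfl)) (GlobeHom.sig hm))
        (α.app (op (glen n n le_rfl)) (GlobeHom.tau hm)) ha hm g =
      α.app (op (glen n a ha)) g := by
  cases g with
  | ident => exact absurd ha (by omega)
  | sig hg =>
    have nat : α.app (op (glen n a ha)) ((sigLE ha ≫ sigma' hm : gl a ⟶ gl m)) =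
        X.map (Quiver.Hom.op (sigLE ha))
          (α.app (op (glen n n le_rfl)) (GlobeHom.sig hm)) :=
      ConcreteCategory.congr_hom (α.naturality (Quiver.Hom.op
        (show glen n a ha ⟶ glen n n le_rfl from ObjectProperty.homMk (sigLE ha)))) (GlobeHom.sig hm)
    rw [sigLE_comp_sig ha hm] at nat
    exact nat.symm
  | tau hg =>
    have nat : α.app (op (glen n a ha)) ((tauLE ha ≫ tau' hm : gl a ⟶ gl m)) =
        X.map (Quiver.Hom.op (tauLE ha))
          (α.app (op (glen n n le_rfl)) (GlobeHom.tau hm)) :=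
      ConcreteCategory.congr_hom (α.naturality (Quiver.Hom.op
        (show glen n a ha ⟶ glen n n le_rfl from ObjectProperty.homMk (tauLE ha)))) (GlobeHom.tau hm)
    rw [tauLE_comp_tau ha hm] at nat
    exact nat.symm

lemma bwd_fwd (X : GlobSet) (n : ℕ) {m : ℕ} (hm : n < m)
    (α : (iotaStar n).obj (yoneda.obj (gl m)) ⟶ (iotaStar n).obj X) :
    Bwd X n hm (Fwd X n hm α) = α := by
  apply NatTrans.ext
  funext j; ext g
  exact bwd_fwd_app X n hm α j.unop.property g

lemma fwd_bwd (X : GlobSet) (n : ℕ) {m : ℕ} (hm : n < m) (p : PPair X n) :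
    Fwd X n hm (Bwd X n hm p) = p := by
  apply Subtype.ext
  apply Prod.ext
  · show X.map (sigLE (le_refl n)).op p.1.1 = p.1.1
    rw [sigLE_self]
    exact FunctorToTypes.map_id_apply X p.1.1
  · show X.map (tauLE (le_refl n)).op p.1.2 = p.1.2
    rw [tauLE_self]
    exact FunctorToTypes.map_id_apply X p.1.2

/-- For `n < m`, morphisms of restricted presheaves out of the restricted `m`-disk
correspond to parallel pairs of `n`-cells. -/
def homEquivPPair (X : GlobSet) (n : ℕ) {m : ℕ} (hm : n < m) :
    ((iotaStar n).obj (yoneda.obj (gl m)) ⟶ (iotaStar n).obj X) ≃ PPair X n where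
  toFun := Fwd X n hm
  invFun := Bwd X n hm
  left_inv := bwd_fwd X n hm
  right_inv := fwd_bwd X n hm

lemma fwd_map (X : GlobSet) (n : ℕ) {m : ℕ} (hm : n < m) (f : yoneda.obj (gl m) ⟶ X) :
    Fwd X n hm ((iotaStar n).map f) = Phi X hm (yonedaEquiv f) := by
  apply Subtype.ext
  apply Prod.ext
  · show f.app (op (gl n)) (GlobeHom.sig hm) = X.map (sigma' hm).op (yonedaEquiv f)
    rw [yonedaEquiv_apply]
    exact ConcreteCategory.congr_hom (f.naturality (sigma' hm).op) (𝟙 (gl m))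
  · show f.app (op (gl n)) (GlobeHom.tau hm) = X.map (tau' hm).op (yonedaEquiv f)
    rw [yonedaEquiv_apply]
    exact ConcreteCategory.congr_hom (f.naturality (tau' hm).op) (𝟙 (gl m))

lemma bij_conj {A B C D : Type*} (e1 : A ≃ B) (e2 : C ≃ D) (g : B → C) (g' : A → D)
    (h : ∀ a, e2 (g (e1 a)) = g' a) : Function.Bijective g ↔ Function.Bijective g' := by
  have hg : g' = ⇑e2 ∘ g ∘ ⇑e1 := by funext a; exact (h a).symm
  constructor
  · intro hb; rw [hg]; exact e2.bijective.comp (hb.comp e1.bijective)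
  · intro hb
    have hg2 : g = ⇑e2.symm ∘ g' ∘ ⇑e1.symm := by
      funext b; rw [hg]; simp
    rw [hg2]
    exact e2.symm.bijective.comp (hb.comp e1.symm.bijective)

lemma coskeletal_iff (n : ℕ) (X : GlobSet) :
    IsCoskeletal n X ↔ ∀ m : ℕ,
      Function.Bijective (fun f : yoneda.obj (gl m) ⟶ X => (iotaStar n).map f) := by
  have base : IsCoskeletal n X ↔ ∀ j : Globeᵒᵖ, IsIso (((iotaAdj n).unit.app X).app j) :=
    NatTrans.isIso_iff_isIso_app _
  rw [base]
  have transfer : ∀ m : ℕ,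
      Function.Bijective (((iotaAdj n).unit.app X).app (op (gl m))) ↔
        Function.Bijective (fun f : yoneda.obj (gl m) ⟶ X => (iotaStar n).map f) := by
    intro m
    have s1 : Function.Bijective (fun f : yoneda.obj (gl m) ⟶ X => (iotaStar n).map f) ↔
        Function.Bijective (fun f : yoneda.obj (gl m) ⟶ X => f ≫ (iotaAdj n).unit.app X) := by
      apply bij_conj (Equiv.refl _)
        ((iotaAdj n).homEquiv (yoneda.obj (gl m)) ((iotaStar n).obj X))
      intro f
      exact (Adjunction.homEquiv_unit _ _ _ _).trans (((iotaAdj n).unit.naturality f).symm)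
    have s2 : Function.Bijective (fun f : yoneda.obj (gl m) ⟶ X => f ≫ (iotaAdj n).unit.app X) ↔
        Function.Bijective (((iotaAdj n).unit.app X).app (op (gl m))) := by
      apply bij_conj yonedaEquiv.symm yonedaEquiv
      intro x
      rw [yonedaEquiv_comp, Equiv.apply_symm_apply]
    exact (s1.trans s2).symm
  constructor
  · intro H m
    exact (transfer m).mp ((isIso_iff_bijective _).mp (H _))
  · intro H j
    rw [isIso_iff_bijective]
    exact (transfer (gval j.unop)).mpr (H _)

lemma bij_map_le (n m : ℕ) (hm : m ≤ n) (X : GlobSet) :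
    Function.Bijective (fun f : yoneda.obj (gl m) ⟶ X => (iotaStar n).map f) := by
  constructor
  · intro f f' h
    apply yonedaEquiv.injective
    have happ := ConcreteCategory.congr_hom (NatTrans.congr_app h (op (glen n m hm))) (𝟙 (gl m))
    rw [yonedaEquiv_apply, yonedaEquiv_apply]
    exact happ
  · intro α
    refine ⟨yonedaEquiv.symm
      (show X.obj (op (gl m)) from α.app (op (glen n m hm)) (𝟙 (gl m))), ?_⟩
    apply NatTrans.ext
    funext j; ext g
    have e := yonedaEquiv_symm_app_apply
      (show X.obj (op (gl m)) from α.app (op (glen n m hm)) (𝟙 (gl m)))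
      (op (gl (gval j.unop.obj))) g
    have nat : α.app (op (glen n (gval j.unop.obj) j.unop.property))
          (((show gl (gval j.unop.obj) ⟶ gl m from g) ≫ 𝟙 (gl m))) =
        X.map (Quiver.Hom.op (show gl (gval j.unop.obj) ⟶ gl m from g))
          (α.app (op (glen n m hm)) (𝟙 (gl m))) :=
      ConcreteCategory.congr_hom (α.naturality (Quiver.Hom.op
        (show glen n (gval j.unop.obj) j.unop.property ⟶ glen n m hm from ObjectProperty.homMk g)))
        (𝟙 (gl m))
    replace nat := (congrArg (fun z => α.app (op (glen n (gval j.unop.obj) j.unop.property)) z)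
      (Category.comp_id (show gl (gval j.unop.obj) ⟶ gl m from g)).symm).trans nat
    exact e.trans nat.symm

lemma bij_map_gt (n m : ℕ) (hm : n < m) (X : GlobSet) :
    Function.Bijective (fun f : yoneda.obj (gl m) ⟶ X => (iotaStar n).map f) ↔
      Function.Bijective (Phi X hm) := by
  apply bij_conj yonedaEquiv.symm (homEquivPPair X n hm)
  intro c
  exact (fwd_map X n hm (yonedaEquiv.symm c)).trans
    (congrArg (fun z => Phi X hm z) (Equiv.apply_symm_apply _ _))

lemma srcS (X : GlobSet) {n k : ℕ} (h : n < k + 1) (h1 : n < k)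
    (c : X.obj (op (gl (k + 1)))) :
    X.map (sigma' h).op c = X.map (sigma' h1).op (gsrc X k c) := by
  rw [gsrc_eq X k (Nat.lt_succ_self k), mapmap, ss']

lemma srcT (X : GlobSet) {n k : ℕ} (h : n < k + 1) (h1 : n < k)
    (c : X.obj (op (gl (k + 1)))) :
    X.map (sigma' h).op c = X.map (sigma' h1).op (gtgt X k c) := by
  rw [gtgt_eq X k (Nat.lt_succ_self k), mapmap, st']

lemma tgtS (X : GlobSet) {n k : ℕ} (h : n < k + 1) (h1 : n < k)
    (c : X.obj (op (gl (k + 1)))) :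
    X.map (tau' h).op c = X.map (tau' h1).op (gsrc X k c) := by
  rw [gsrc_eq X k (Nat.lt_succ_self k), mapmap, ts']

lemma tgtT (X : GlobSet) {n k : ℕ} (h : n < k + 1) (h1 : n < k)
    (c : X.obj (op (gl (k + 1)))) :
    X.map (tau' h).op c = X.map (tau' h1).op (gtgt X k c) := by
  rw [gtgt_eq X k (Nat.lt_succ_self k), mapmap, tt']

lemma combi (n : ℕ) (X : GlobSet) :
    (∀ m, ∀ hm : n < m, Function.Bijective (Phi X hm)) ↔
      ∀ k, n ≤ k → Function.Bijective (Phi X (Nat.lt_succ_self k)) := by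
  constructor
  · intro A k hk
    rcases eq_or_lt_of_le hk with rfl | hk'
    · exact A (n + 1) (Nat.lt_succ_self n)
    · constructor
      · intro c c' e
        apply (A (k + 1) (hk'.trans (Nat.lt_succ_self k))).injective
        have e1 : gsrc X k c = gsrc X k c' := congrArg (fun p => p.1.1) e
        apply phi_eq
        · rw [srcS X _ hk' c, srcS X _ hk' c', e1]
        · rw [tgtS X _ hk' c, tgtS X _ hk' c', e1]
      · rintro ⟨⟨x, y⟩, hp⟩
        obtain ⟨c, hc⟩ := (A (k + 1) (hk'.trans (Nat.lt_succ_self k))).surjective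
          (Phi X hk' x)
        have hc1 : X.map (sigma' (hk'.trans (Nat.lt_succ_self k))).op c =
            X.map (sigma' hk').op x := congrArg (fun p => p.1.1) hc
        have hc2 : X.map (tau' (hk'.trans (Nat.lt_succ_self k))).op c =
            X.map (tau' hk').op x := congrArg (fun p => p.1.2) hc
        have hsc : gsrc X k c = x := by
          apply (A k hk').injective
          apply phi_eq
          · rw [← srcS X _ hk' c]; exact hc1
          · rw [← tgtS X _ hk' c]; exact hc2
        have htc : gtgt X k c = y := by
          apply (A k hk').injective
          apply phi_eq
          · rw [← srcT X (hk'.trans (Nat.lt_succ_self k)) hk' c, hc1]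
            exact parallel_map_sig X hp hk'
          · rw [← tgtT X (hk'.trans (Nat.lt_succ_self k)) hk' c, hc2]
            exact parallel_map_tau X hp hk'
        exact ⟨c, Subtype.ext (Prod.ext hsc htc)⟩
  · intro B m
    induction m with
    | zero => intro hm; exact absurd hm (Nat.not_lt_zero n)
    | succ p ih =>
      intro hm
      rcases Nat.lt_succ_iff_lt_or_eq.mp hm with hlt | heq
      · have IH := ih hlt
        constructor
        · intro c c' e
          have e1 : X.map (sigma' hm).op c = X.map (sigma' hm).op c' :=
            congrArg (fun q => q.1.1) e
          have e2 : X.map (tau' hm).op c = X.map (tau' hm).op c' :=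
            congrArg (fun q => q.1.2) e
          have hs : gsrc X p c = gsrc X p c' := by
            apply IH.injective
            apply phi_eq
            · rw [← srcS X hm hlt c, ← srcS X hm hlt c']; exact e1
            · rw [← tgtS X hm hlt c, ← tgtS X hm hlt c']; exact e2
          have ht : gtgt X p c = gtgt X p c' := by
            apply IH.injective
            apply phi_eq
            · rw [← srcT X hm hlt c, ← srcT X hm hlt c']; exact e1
            · rw [← tgtT X hm hlt c, ← tgtT X hm hlt c']; exact e2
          apply (B p (le_of_lt hlt)).injective
          apply phi_eq
          · rw [← gsrc_eq X p (Nat.lt_succ_self p), hs]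
          · rw [← gtgt_eq X p (Nat.lt_succ_self p), ht]
        · rintro ⟨⟨x, y⟩, hp⟩
          obtain ⟨a, ha⟩ := IH.surjective ⟨(x, y), hp⟩
          have hpar_a : Parallel X p a a := by
            cases p
            · trivial
            · exact ⟨rfl, rfl⟩
          obtain ⟨c, hc⟩ := (B p (le_of_lt hlt)).surjective ⟨(a, a), hpar_a⟩
          have hc1 : gsrc X p c = a := congrArg (fun q => q.1.1) hc
          have ha1 : X.map (sigma' hlt).op a = x := congrArg (fun q => q.1.1) ha
          have ha2 : X.map (tau' hlt).op a = y := congrArg (fun q => q.1.2) ha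
          refine ⟨c, Subtype.ext (Prod.ext ?_ ?_)⟩
          · show X.map (sigma' hm).op c = x
            rw [srcS X hm hlt c, hc1, ha1]
          · show X.map (tau' hm).op c = y
            rw [tgtS X hm hlt c, hc1, ha2]
      · subst heq
        exact B n le_rfl

lemma rhs_iff (X : GlobSet) (k : ℕ) :
    (Function.Injective (fun c : X.obj (op (gl (k+1))) => (gsrc X k c, gtgt X k c)) ∧
      Set.range (fun c : X.obj (op (gl (k+1))) => (gsrc X k c, gtgt X k c)) =
        {p : X.obj (op (gl k)) × X.obj (op (gl k)) | Parallel X k p.1 p.2}) ↔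
    Function.Bijective (Phi X (Nat.lt_succ_self k)) := by
  constructor
  · rintro ⟨hinj, hrange⟩
    constructor
    · intro c c' e
      apply hinj
      have e1 : X.map (sigma' (Nat.lt_succ_self k)).op c =
          X.map (sigma' (Nat.lt_succ_self k)).op c' := congrArg (fun q => q.1.1) e
      have e2 : X.map (tau' (Nat.lt_succ_self k)).op c =
          X.map (tau' (Nat.lt_succ_self k)).op c' := congrArg (fun q => q.1.2) e
      exact Prod.ext e1 e2
    · rintro ⟨⟨x, y⟩, hp⟩
      have hmem : (x, y) ∈ Set.range
          (fun c : X.obj (op (gl (k+1))) => (gsrc X k c, gtgt X k c)) := by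
        rw [hrange]; exact hp
      obtain ⟨c, hc⟩ := hmem
      exact ⟨c, Subtype.ext hc⟩
  · intro hb
    constructor
    · intro c c' e
      apply hb.injective
      apply phi_eq
      · exact congrArg Prod.fst e
      · exact congrArg Prod.snd e
    · ext p
      constructor
      · rintro ⟨c, rfl⟩
        exact parallel_pair X (Nat.lt_succ_self k) c
      · intro hp
        obtain ⟨c, hc⟩ := hb.surjective ⟨p, hp⟩
        exact ⟨c, congrArg Subtype.val hc⟩


/-- A globular set is `n`-coskeletal iff for every `k ≥ n` the map
`X_{k+1} → X_k × X_k, c ↦ (s c, t c)` is injective with image exactly the set of parallel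
pairs of `k`-cells: each parallel pair admits exactly one filling `(k+1)`-cell. -/
theorem statement5 (n : ℕ) (X : GlobSet) :
    IsCoskeletal n X ↔
      ∀ k : ℕ, n ≤ k →
        Function.Injective (fun c : X.obj (op (gl (k+1))) => (gsrc X k c, gtgt X k c)) ∧
        Set.range (fun c : X.obj (op (gl (k+1))) => (gsrc X k c, gtgt X k c)) =
          {p : X.obj (op (gl k)) × X.obj (op (gl k)) | Parallel X k p.1 p.2} := by
  rw [coskeletal_iff]
  have step1 : (∀ m : ℕ, Function.Bijective
        (fun f : yoneda.obj (gl m) ⟶ X => (iotaStar n).map f)) ↔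
      (∀ m, ∀ hm : n < m, Function.Bijective (Phi X hm)) := by
    constructor
    · intro H m hm
      exact (bij_map_gt n m hm X).mp (H m)
    · intro H m
      rcases le_or_gt m n with h | h
      · exact bij_map_le n m h X
      · exact (bij_map_gt n m h X).mpr (H m h)
  rw [step1, combi]
  constructor
  · intro H k hk
    exact (rhs_iff X k).mpr (H k hk)
  · intro H k hk
    exact (rhs_iff X k).mp (H k hk)
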